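/- Let R be a domain, n ≥ 1, and let B = R[x₁^{±1},…,xₙ^{±1}] be the Laurent polynomial ring in n variables over R. Let M be a submonoid of ℤⁿ and let R[M] be the R-subalgebra of B generated by the monomials x^a with a ∈ M. Then R[M] is quasi-factorially closed in B if and only if the subgroup ⟨M⟩ of ℤⁿ generated by M is a direct summand of ℤⁿ (equivalently, ℤⁿ/⟨M⟩ is torsion-free). -/

import Mathlib

/-- An `R`-subalgebra `A` of `B` is quasi-factorially closed (qfc) in `B` if for all
nonzero `a, b ∈ B` with `a * b ∈ A` there are units `u, v` of `B` with `u*a ∈ A`, `v*b ∈ A`. -/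
def IsQfc {R B : Type*} [CommSemiring R] [CommRing B] [Algebra R B] (A : Subalgebra R B) : Prop :=
  ∀ a b : B, a ≠ 0 → b ≠ 0 → a * b ∈ A →
    ∃ u v : Bˣ, (u : B) * a ∈ A ∧ (v : B) * b ∈ A

/-- For a submonoid `M ⊆ ℤⁿ`, the `R`-subalgebra `R[M]` of the Laurent polynomial ring
`B = R[x₁^{±1},…,xₙ^{±1}]` generated by the monomials `x^a`, `a ∈ M`. -/
noncomputable def monomialSubalgebra (R : Type*) [CommRing R] {n : ℕ}
    (M : AddSubmonoid (Fin n → ℤ)) : Subalgebra R (AddMonoidAlgebra R (Fin n → ℤ)) :=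
  Algebra.adjoin R (AddMonoidAlgebra.of' R (Fin n → ℤ) '' (M : Set (Fin n → ℤ)))

open AddMonoidAlgebra Finsupp in
lemma mem_monomialSubalgebra_iff {R : Type*} [CommRing R] {n : ℕ}
    (M : AddSubmonoid (Fin n → ℤ)) (f : AddMonoidAlgebra R (Fin n → ℤ)) :
    f ∈ monomialSubalgebra R M ↔ ∀ x ∈ f.coeff.support, x ∈ M := by
  classical
  constructor
  · intro hf
    refine Algebra.adjoin_induction ?_ ?_ ?_ ?_ hf
    · rintro _ ⟨m, hm, rfl⟩ x hx
      rw [of'_apply, AddMonoidAlgebra.coeff_single] at hx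
      have h := Finsupp.support_single_subset hx
      rw [Finset.mem_singleton] at h
      exact h ▸ hm
    · intro r x hx
      rw [Algebra.algebraMap_eq_smul_one, AddMonoidAlgebra.one_def, AddMonoidAlgebra.smul_single', AddMonoidAlgebra.coeff_single] at hx
      have h := Finsupp.support_single_subset hx
      rw [Finset.mem_singleton] at h
      exact h ▸ M.zero_mem
    · intro p q _ _ hp hq x hx
      rw [AddMonoidAlgebra.coeff_add] at hx
      rcases Finset.mem_union.1 (Finsupp.support_add hx) with h | h
      exacts [hp x h, hq x h]
    · intro p q _ _ hp hq x hx
      obtain ⟨y, hy, z, hz, rfl⟩ := Finset.mem_add.1 (AddMonoidAlgebra.support_coeff_mul_subset p q hx)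
      exact M.add_mem (hp y hy) (hq z hz)
  · intro hf
    rw [← AddMonoidAlgebra.sum_coeff_single f]
    refine sum_mem fun a ha => ?_
    have : AddMonoidAlgebra.single a (f.coeff a) = (f.coeff a) • AddMonoidAlgebra.of' R (Fin n → ℤ) a := by
      rw [of'_apply, AddMonoidAlgebra.smul_single', mul_one]
    rw [this]
    exact Subalgebra.smul_mem _ (Algebra.subset_adjoin (Set.mem_image_of_mem _ (hf a ha))) _

lemma mem_closure_sub {G : Type*} [AddCommGroup G] (M : AddSubmonoid G) {x : G}
    (hx : x ∈ AddSubgroup.closure (M : Set G)) :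
    ∃ m₁ ∈ M, ∃ m₂ ∈ M, x = m₁ - m₂ := by
  induction hx using AddSubgroup.closure_induction with
  | mem x hx => exact ⟨x, hx, 0, M.zero_mem, by simp⟩
  | zero => exact ⟨0, M.zero_mem, 0, M.zero_mem, by simp⟩
  | add x y hx hy ihx ihy =>
    obtain ⟨a, ha, b, hb, rfl⟩ := ihx
    obtain ⟨c, hc, d, hd, rfl⟩ := ihy
    exact ⟨a + c, M.add_mem ha hc, b + d, M.add_mem hb hd, by abel⟩
  | neg x hx ihx =>
    obtain ⟨a, ha, b, hb, rfl⟩ := ihx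
    exact ⟨b, hb, a, ha, by abel⟩

lemma translate_into {G : Type*} [AddCommGroup G] (M : AddSubmonoid G) (S : Finset G)
    (hS : ∀ s ∈ S, s ∈ AddSubgroup.closure (M : Set G)) :
    ∃ m ∈ M, ∀ s ∈ S, s + m ∈ M := by
  classical
  induction S using Finset.induction_on with
  | empty => exact ⟨0, M.zero_mem, by simp⟩
  | @insert a s hx ih =>
    obtain ⟨m, hm, hms⟩ := ih fun t ht => hS t (Finset.mem_insert_of_mem ht)
    obtain ⟨m₁, hm₁, m₂, hm₂, he⟩ := mem_closure_sub M (hS a (Finset.mem_insert_self a s))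
    refine ⟨m + m₂, M.add_mem hm hm₂, fun t ht => ?_⟩
    rcases Finset.mem_insert.1 ht with rfl | ht
    · have : t + (m + m₂) = m₁ + m := by rw [he]; abel
      rw [this]; exact M.add_mem hm₁ hm
    · have : t + (m + m₂) = (t + m) + m₂ := by abel
      rw [this]; exact M.add_mem (hms t ht) hm₂

lemma mul_apply_eq_zero_of_ne {R G : Type*} [CommRing R] [AddCommGroup G]
    (p q : AddMonoidAlgebra R G) {z : G}
    (h : ∀ x ∈ p.coeff.support, ∀ y ∈ q.coeff.support, x + y ≠ z) : (p * q).coeff z = 0 := by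
  classical
  rw [AddMonoidAlgebra.coeff_mul, Finsupp.sum]
  refine Finset.sum_eq_zero fun x hx => ?_
  rw [Finsupp.sum]
  exact Finset.sum_eq_zero fun y hy => if_neg (h x hx y hy)

lemma aux_top {R G : Type*} [CommRing R] [IsDomain R] [AddCommGroup G] [UniqueSums G]
    (π : G →+ ℤ) (f g : AddMonoidAlgebra R G) (hf : f ≠ 0) (hg : g ≠ 0)
    (h : ∀ z ∈ (f * g).coeff.support, π z = 0) :
    ∃ c : ℤ, (∃ x ∈ f.coeff.support, π x = c) ∧ (∀ x ∈ f.coeff.support, π x ≤ c)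
      ∧ (∀ y ∈ g.coeff.support, π y ≤ -c) := by
  classical
  obtain ⟨xf, hxf, hmaxf⟩ := f.coeff.support.exists_max_image π (Finsupp.support_nonempty_iff.2 (mt AddMonoidAlgebra.coeff_eq_zero.1 hf))
  obtain ⟨xg, hxg, hmaxg⟩ := g.coeff.support.exists_max_image π (Finsupp.support_nonempty_iff.2 (mt AddMonoidAlgebra.coeff_eq_zero.1 hg))
  set ft : AddMonoidAlgebra R G := AddMonoidAlgebra.ofCoeff (Finsupp.filter (fun x => π x = π xf) f.coeff) with hft
  set gt : AddMonoidAlgebra R G := AddMonoidAlgebra.ofCoeff (Finsupp.filter (fun y => π y = π xg) g.coeff) with hgt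
  set fr : AddMonoidAlgebra R G := AddMonoidAlgebra.ofCoeff (Finsupp.filter (fun x => ¬ π x = π xf) f.coeff) with hfr
  set gr : AddMonoidAlgebra R G := AddMonoidAlgebra.ofCoeff (Finsupp.filter (fun y => ¬ π y = π xg) g.coeff) with hgr
  have hfts : ft.coeff.support = f.coeff.support.filter (fun x => π x = π xf) := Finsupp.support_filter _ _
  have hgts : gt.coeff.support = g.coeff.support.filter (fun y => π y = π xg) := Finsupp.support_filter _ _
  have hfrs : fr.coeff.support = f.coeff.support.filter (fun x => ¬ π x = π xf) := Finsupp.support_filter _ _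
  have hgrs : gr.coeff.support = g.coeff.support.filter (fun y => ¬ π y = π xg) := Finsupp.support_filter _ _
  have hftne : ft ≠ 0 := by
    intro h0
    have h1 : ft.coeff xf = f.coeff xf := Finsupp.filter_apply_pos _ f.coeff rfl
    rw [h0, AddMonoidAlgebra.coeff_zero, Finsupp.coe_zero, Pi.zero_apply] at h1
    exact Finsupp.mem_support_iff.1 hxf h1.symm
  have hgtne : gt ≠ 0 := by
    intro h0
    have h1 : gt.coeff xg = g.coeff xg := Finsupp.filter_apply_pos _ g.coeff rfl
    rw [h0, AddMonoidAlgebra.coeff_zero, Finsupp.coe_zero, Pi.zero_apply] at h1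
    exact Finsupp.mem_support_iff.1 hxg h1.symm
  have hprod : ft * gt ≠ 0 := mul_ne_zero hftne hgtne
  obtain ⟨z, hz⟩ := Finsupp.support_nonempty_iff.2 (mt AddMonoidAlgebra.coeff_eq_zero.1 hprod)
  obtain ⟨x, hx, y, hy, rfl⟩ := Finset.mem_add.1 (AddMonoidAlgebra.support_coeff_mul_subset ft gt hz)
  rw [hfts, Finset.mem_filter] at hx
  rw [hgts, Finset.mem_filter] at hy
  have key : (f * g).coeff (x + y) = (ft * gt).coeff (x + y) := by
    have hfe : f = ft + fr := AddMonoidAlgebra.coeff_injective (Finsupp.filter_pos_add_filter_neg f.coeff _).symm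
    have hge : g = gt + gr := AddMonoidAlgebra.coeff_injective (Finsupp.filter_pos_add_filter_neg g.coeff _).symm
    have e1 : (ft * gr).coeff (x + y) = 0 := by
      refine mul_apply_eq_zero_of_ne _ _ fun a ha b hb hab => ?_
      rw [hfts, Finset.mem_filter] at ha
      rw [hgrs, Finset.mem_filter] at hb
      have h1 : π b < π xg := lt_of_le_of_ne (hmaxg b hb.1) hb.2
      have : π (a + b) < π (x + y) := by
        simp only [map_add, ha.2, hx.2, hy.2]
        omega
      exact this.ne (congrArg π hab)
    have e2 : (fr * gt).coeff (x + y) = 0 := by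
      refine mul_apply_eq_zero_of_ne _ _ fun a ha b hb hab => ?_
      rw [hfrs, Finset.mem_filter] at ha
      rw [hgts, Finset.mem_filter] at hb
      have h1 : π a < π xf := lt_of_le_of_ne (hmaxf a ha.1) ha.2
      have : π (a + b) < π (x + y) := by
        simp only [map_add, ha.2, hb.2, hx.2, hy.2]
        omega
      exact this.ne (congrArg π hab)
    have e3 : (fr * gr).coeff (x + y) = 0 := by
      refine mul_apply_eq_zero_of_ne _ _ fun a ha b hb hab => ?_
      rw [hfrs, Finset.mem_filter] at ha
      rw [hgrs, Finset.mem_filter] at hb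
      have h1 : π a < π xf := lt_of_le_of_ne (hmaxf a ha.1) ha.2
      have h2 : π b < π xg := lt_of_le_of_ne (hmaxg b hb.1) hb.2
      have : π (a + b) < π (x + y) := by
        simp only [map_add, hx.2, hy.2]
        omega
      exact this.ne (congrArg π hab)
    conv_lhs => rw [hfe, hge]
    rw [add_mul, mul_add, mul_add]
    simp only [AddMonoidAlgebra.coeff_add, Finsupp.add_apply, e1, e2, e3]; ring
  have hzfg : (x + y) ∈ (f * g).coeff.support := by
    rw [Finsupp.mem_support_iff, key]
    exact Finsupp.mem_support_iff.1 hz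
  have hsum : π xf + π xg = 0 := by
    have := h _ hzfg
    rw [map_add, hx.2, hy.2] at this
    exact this
  refine ⟨π xf, ⟨xf, hxf, rfl⟩, hmaxf, fun b hb => ?_⟩
  have := hmaxg b hb
  omega

lemma pi_const_on_support {R G : Type*} [CommRing R] [IsDomain R] [AddCommGroup G] [UniqueSums G]
    (π : G →+ ℤ) (f g : AddMonoidAlgebra R G) (hf : f ≠ 0) (hg : g ≠ 0)
    (h : ∀ z ∈ (f * g).coeff.support, π z = 0) :
    ∀ x ∈ f.coeff.support, ∀ y ∈ f.coeff.support, π x = π y := by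
  obtain ⟨c, ⟨x₀, hx₀, hx₀c⟩, hle, hgle⟩ := aux_top π f g hf hg h
  obtain ⟨c', ⟨x₁, hx₁, hx₁c⟩, hle', hgle'⟩ :=
    aux_top (-π) f g hf hg (fun z hz => by simp [h z hz])
  obtain ⟨y₀, hy₀⟩ := Finsupp.support_nonempty_iff.2 (mt AddMonoidAlgebra.coeff_eq_zero.1 hg)
  have h1 : π y₀ ≤ -c := hgle y₀ hy₀
  have h2 : (-π) y₀ ≤ -c' := hgle' y₀ hy₀
  simp only [AddMonoidHom.neg_apply] at h2 hle' hx₁c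
  have hcc : c' = -c := by
    have h3 : -π x₀ ≤ c' := by have := hle' x₀ hx₀; omega
    omega
  intro x hx y hy
  have e1 : π x ≤ c := hle x hx
  have e2 : -π x ≤ c' := hle' x hx
  have e3 : π y ≤ c := hle y hy
  have e4 : -π y ≤ c' := hle' y hy
  omega

/-- The unit `x^d` of the Laurent polynomial ring. -/
noncomputable def monoUnit {R G : Type*} [CommRing R] [AddCommGroup G] (d : G) :
    (AddMonoidAlgebra R G)ˣ where
  val := AddMonoidAlgebra.single d 1
  inv := AddMonoidAlgebra.single (-d) 1
  val_inv := by
    rw [AddMonoidAlgebra.single_mul_single, mul_one, add_neg_cancel, AddMonoidAlgebra.one_def]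
  inv_val := by
    rw [AddMonoidAlgebra.single_mul_single, mul_one, neg_add_cancel, AddMonoidAlgebra.one_def]

/-- `⇐` direction core: from a complement, produce a unit shift putting the first factor in. -/
lemma exists_unit_shift {R : Type*} [CommRing R] [IsDomain R] {n : ℕ}
    (M : AddSubmonoid (Fin n → ℤ)) (N : AddSubgroup (Fin n → ℤ))
    (hN : IsCompl (AddSubgroup.closure (M : Set (Fin n → ℤ))) N)
    (a b : AddMonoidAlgebra R (Fin n → ℤ)) (ha : a ≠ 0) (hb : b ≠ 0)
    (hab : a * b ∈ monomialSubalgebra R M) :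
    ∃ u : (AddMonoidAlgebra R (Fin n → ℤ))ˣ, (u : AddMonoidAlgebra R (Fin n → ℤ)) * a ∈
      monomialSubalgebra R M := by
  classical
  set G := AddSubgroup.closure (M : Set (Fin n → ℤ)) with hG
  set p := AddSubgroup.toIntSubmodule G with hp
  set q := AddSubgroup.toIntSubmodule N with hq'
  have hpq : IsCompl p q := AddSubgroup.toIntSubmodule.isCompl_iff.1 hN
  set proj := q.projectionOnto p hpq.symm with hproj
  have hker : LinearMap.ker proj = p := Submodule.linearProjOfIsCompl_ker hpq.symm
  have hz0 : ∀ z ∈ (a * b).coeff.support, proj z = 0 := by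
    intro z hz
    have hzM : z ∈ M := (mem_monomialSubalgebra_iff M (a * b)).1 hab z hz
    have hzp : z ∈ p := AddSubgroup.subset_closure hzM
    rw [← hker] at hzp
    exact hzp
  have hconst : ∀ x ∈ a.coeff.support, ∀ y ∈ a.coeff.support, proj x = proj y := by
    intro x hx y hy
    ext i
    have := pi_const_on_support
      (AddMonoidHom.mk' (fun v => (proj v : Fin n → ℤ) i)
        (fun v w => by show (proj (v + w) : Fin n → ℤ) i = _; rw [map_add]; rfl))
      a b ha hb (fun z hz => by rw [AddMonoidHom.mk'_apply, hz0 z hz]; rfl)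
      x hx y hy
    exact this
  obtain ⟨x₀, hx₀⟩ := Finsupp.support_nonempty_iff.2 (mt AddMonoidAlgebra.coeff_eq_zero.1 ha)
  have hdiff : ∀ x ∈ a.coeff.support, x - x₀ ∈ G := by
    intro x hx
    have hpp : x - x₀ ∈ p := by
      rw [← hker, LinearMap.mem_ker, map_sub, hconst x hx x₀ hx₀, sub_self]
    exact hpp
  obtain ⟨m, hm, hms⟩ := translate_into M (a.coeff.support.image (· - x₀)) (by
    intro s hs
    obtain ⟨x, hx, rfl⟩ := Finset.mem_image.1 hs
    exact hdiff x hx)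
  refine ⟨monoUnit (m - x₀), ?_⟩
  have hval : ((monoUnit (m - x₀) : (AddMonoidAlgebra R (Fin n → ℤ))ˣ) : AddMonoidAlgebra R (Fin n → ℤ))
      = AddMonoidAlgebra.single (m - x₀) 1 := rfl
  rw [mem_monomialSubalgebra_iff, hval]
  intro z hz
  have hsub := AddMonoidAlgebra.support_coeff_mul_subset (AddMonoidAlgebra.single (m - x₀) (1:R)) a hz
  rw [Finset.mem_add] at hsub
  obtain ⟨y, hy, x, hx, rfl⟩ := hsub
  have hy1 : y = m - x₀ := by
    rw [AddMonoidAlgebra.coeff_single] at hy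
    have := Finsupp.support_single_subset hy
    rwa [Finset.mem_singleton] at this
  subst hy1
  have : (m - x₀) + x = (x - x₀) + m := by abel
  rw [this]
  exact hms (x - x₀) (Finset.mem_image_of_mem _ hx)

open AddMonoidAlgebra in
lemma smul_mem_closure_imp {R : Type*} [CommRing R] [IsDomain R] {n : ℕ}
    (M : AddSubmonoid (Fin n → ℤ)) (hq : IsQfc (monomialSubalgebra R M))
    (c : Fin n → ℤ) (k : ℕ) (hk : 0 < k)
    (hkc : k • c ∈ AddSubgroup.closure (M : Set (Fin n → ℤ))) :
    c ∈ AddSubgroup.closure (M : Set (Fin n → ℤ)) := by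
  classical
  by_cases hc0 : c = 0
  · rw [hc0]; exact zero_mem _
  have hkcne : k • c ≠ 0 := smul_ne_zero hk.ne' hc0
  obtain ⟨m₀, hm₀, hms⟩ := translate_into M {k • c} (by
    intro s hs; rw [Finset.mem_singleton] at hs; rw [hs]; exact hkc)
  have hmkc : m₀ + k • c ∈ M := by
    have := hms (k • c) (Finset.mem_singleton_self _)
    rwa [add_comm] at this
  set t : AddMonoidAlgebra R (Fin n → ℤ) := AddMonoidAlgebra.single c 1 with ht
  set a : AddMonoidAlgebra R (Fin n → ℤ) :=
    AddMonoidAlgebra.single m₀ 1 + AddMonoidAlgebra.single (m₀ + c) 1 with hadef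
  set b : AddMonoidAlgebra R (Fin n → ℤ) := ∑ i ∈ Finset.range k, (-t) ^ i with hbdef
  have hnegt : -t = AddMonoidAlgebra.single c (-1 : R) := by
    rw [ht, AddMonoidAlgebra.single_neg]
  have hpow : (-t) ^ k = AddMonoidAlgebra.single (k • c) ((-1 : R) ^ k) := by
    rw [hnegt, AddMonoidAlgebra.single_pow]
  have h2 : (1 + t) * b = 1 - AddMonoidAlgebra.single (k • c) ((-1 : R) ^ k) := by
    have hg := geom_sum_mul (-t) k
    rw [← hbdef] at hg
    rw [← hpow]
    linear_combination -hg
  have h1 : a = AddMonoidAlgebra.single m₀ (1 : R) * (1 + t) := by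
    rw [mul_add, mul_one, ht, AddMonoidAlgebra.single_mul_single, mul_one, hadef]
  have hab : a * b = AddMonoidAlgebra.single m₀ (1 : R)
      - AddMonoidAlgebra.single (m₀ + k • c) ((-1 : R) ^ k) := by
    rw [h1, mul_assoc, h2, mul_sub, mul_one, AddMonoidAlgebra.single_mul_single, one_mul]
  have hmemA : a * b ∈ monomialSubalgebra R M := by
    rw [hab]
    refine sub_mem ?_ ?_ <;> rw [mem_monomialSubalgebra_iff] <;> intro x hx <;> rw [AddMonoidAlgebra.coeff_single] at hx <;>
      have h := Finsupp.support_single_subset hx <;> rw [Finset.mem_singleton] at h <;> subst h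
    · exact hm₀
    · exact hmkc
  have hmc : m₀ + c ≠ m₀ := fun h => hc0 (by simpa using h)
  have hmkcne : m₀ + k • c ≠ m₀ := fun h => hkcne (by simpa using h)
  have ha : a ≠ 0 := by
    intro h0
    have : a.coeff m₀ = 0 := by rw [h0]; rfl
    rw [hadef, AddMonoidAlgebra.coeff_add, Finsupp.add_apply, AddMonoidAlgebra.coeff_single,
      AddMonoidAlgebra.coeff_single, Finsupp.single_eq_same, Finsupp.single_eq_of_ne' hmc,
      add_zero] at this
    exact one_ne_zero this
  have habne : a * b ≠ 0 := by
    intro h0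
    have : (a * b).coeff m₀ = 0 := by rw [h0]; rfl
    rw [hab, AddMonoidAlgebra.coeff_sub, Finsupp.sub_apply, AddMonoidAlgebra.coeff_single,
      AddMonoidAlgebra.coeff_single, Finsupp.single_eq_same, Finsupp.single_eq_of_ne' hmkcne,
      sub_zero] at this
    exact one_ne_zero this
  have hbne : b ≠ 0 := right_ne_zero_of_mul habne
  obtain ⟨u, v, hu, -⟩ := hq a b ha hbne hmemA
  have hune : (u : AddMonoidAlgebra R (Fin n → ℤ)) ≠ 0 := Units.ne_zero u
  have huinvne : ((u⁻¹ : _ˣ) : AddMonoidAlgebra R (Fin n → ℤ)) ≠ 0 := Units.ne_zero _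
  have honesupp : ∀ z ∈ ((u : AddMonoidAlgebra R (Fin n → ℤ)) *
      ((u⁻¹ : _ˣ) : AddMonoidAlgebra R (Fin n → ℤ))).coeff.support, z = 0 := by
    intro z hz
    rw [u.mul_inv, AddMonoidAlgebra.one_def, AddMonoidAlgebra.coeff_single] at hz
    have h := Finsupp.support_single_subset hz
    rwa [Finset.mem_singleton] at h
  obtain ⟨d, hd⟩ := Finsupp.support_nonempty_iff.2 (mt AddMonoidAlgebra.coeff_eq_zero.1 hune)
  have hsupp_sub : (u : AddMonoidAlgebra R (Fin n → ℤ)).coeff.support ⊆ {d} := by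
    intro x hx
    rw [Finset.mem_singleton]
    funext i
    exact pi_const_on_support (Pi.evalAddMonoidHom _ i) _ _ hune huinvne
      (fun z hz => by rw [honesupp z hz]; rfl) x hx d hd
  set r := (u : AddMonoidAlgebra R (Fin n → ℤ)).coeff d with hr
  have hu_eq : (u : AddMonoidAlgebra R (Fin n → ℤ)) = AddMonoidAlgebra.single d r :=
    AddMonoidAlgebra.coeff_injective (Finsupp.support_subset_singleton.1 hsupp_sub)
  have hrne : r ≠ 0 := by
    intro h0
    apply hune
    rw [hu_eq, h0]
    simp
  have hua : (u : AddMonoidAlgebra R (Fin n → ℤ)) * a =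
      AddMonoidAlgebra.single (d + m₀) r + AddMonoidAlgebra.single (d + (m₀ + c)) r := by
    rw [hu_eq, hadef, mul_add, AddMonoidAlgebra.single_mul_single,
      AddMonoidAlgebra.single_mul_single, mul_one]
  have hne2 : d + (m₀ + c) ≠ d + m₀ := by
    intro h
    exact hmc (add_left_cancel h)
  have hm1 : d + m₀ ∈ M := by
    refine (mem_monomialSubalgebra_iff M _).1 hu (d + m₀) ?_
    rw [hua, Finsupp.mem_support_iff, AddMonoidAlgebra.coeff_add, Finsupp.add_apply,
      AddMonoidAlgebra.coeff_single, AddMonoidAlgebra.coeff_single, Finsupp.single_eq_same,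
      Finsupp.single_eq_of_ne' hne2, add_zero]
    exact hrne
  have hm2 : d + (m₀ + c) ∈ M := by
    refine (mem_monomialSubalgebra_iff M _).1 hu (d + (m₀ + c)) ?_
    rw [hua, Finsupp.mem_support_iff, AddMonoidAlgebra.coeff_add, Finsupp.add_apply,
      AddMonoidAlgebra.coeff_single, AddMonoidAlgebra.coeff_single, Finsupp.single_eq_same,
      Finsupp.single_eq_of_ne' (Ne.symm hne2), zero_add]
    exact hrne
  have hsub : (d + (m₀ + c)) - (d + m₀) ∈ AddSubgroup.closure (M : Set (Fin n → ℤ)) :=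
    sub_mem (AddSubgroup.subset_closure hm2) (AddSubgroup.subset_closure hm1)
  have : (d + (m₀ + c)) - (d + m₀) = c := by abel
  rwa [this] at hsub

/-- `R[M]` is qfc in `B = R[x₁^{±1},…,xₙ^{±1}]` iff the subgroup `⟨M⟩` generated by `M`
is a direct summand of `ℤⁿ`. -/
theorem monomialSubalgebra_isQfc_iff_directSummand
    (R : Type*) [CommRing R] [IsDomain R] (n : ℕ) (hn : 1 ≤ n)
    (M : AddSubmonoid (Fin n → ℤ)) :
    IsQfc (monomialSubalgebra R M) ↔
      ∃ N : AddSubgroup (Fin n → ℤ),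
        IsCompl (AddSubgroup.closure (M : Set (Fin n → ℤ))) N := by
  constructor
  · intro hq
    set G := AddSubgroup.closure (M : Set (Fin n → ℤ)) with hG
    set p := AddSubgroup.toIntSubmodule G with hp
    have hmemp : ∀ y : Fin n → ℤ, y ∈ p ↔ y ∈ G := fun y => Iff.rfl
    haveI : NoZeroSMulDivisors ℤ ((Fin n → ℤ) ⧸ p) := by
      refine ⟨fun {k} {x} hkx => ?_⟩
      by_cases hk : k = 0
      · exact Or.inl hk
      right
      obtain ⟨c, rfl⟩ := Submodule.mkQ_surjective p x
      have hkc : k • c ∈ p := by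
        have : p.mkQ (k • c) = 0 := by rw [map_smul, hkx]
        rwa [Submodule.mkQ_apply, Submodule.Quotient.mk_eq_zero] at this
      set j := k.natAbs with hj
      have hjpos : 0 < j := Int.natAbs_pos.2 hk
      have hjc : j • c ∈ G := by
        rcases Int.natAbs_eq k with h | h
        · have : (j : ℤ) • c ∈ p := by rwa [← h]
          rwa [natCast_zsmul] at this
        · have h' : -k = (j : ℤ) := by omega
          have : (j : ℤ) • c ∈ p := by
            have hneg : -(k • c) ∈ p := neg_mem hkc
            rwa [← neg_smul, h'] at hneg
          rwa [natCast_zsmul] at this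
      have hc : c ∈ G := smul_mem_closure_imp M hq c j hjpos hjc
      rw [Submodule.mkQ_apply, Submodule.Quotient.mk_eq_zero]
      exact hc
    haveI : Module.Free ℤ ((Fin n → ℤ) ⧸ p) := Module.free_of_finite_type_torsion_free'
    obtain ⟨s, hs⟩ := Module.projective_lifting_property p.mkQ LinearMap.id
      (Submodule.mkQ_surjective p)
    set g : (Fin n → ℤ) →ₗ[ℤ] (Fin n → ℤ) := LinearMap.id - s ∘ₗ p.mkQ with hgdef
    have hgapp : ∀ x : Fin n → ℤ, g x = x - s (p.mkQ x) := by
      intro x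
      rw [hgdef, LinearMap.sub_apply, LinearMap.id_apply, LinearMap.comp_apply]
    have hmem : ∀ x : Fin n → ℤ, g x ∈ p := by
      intro x
      have h1 : p.mkQ (g x) = 0 := by
        rw [hgapp, map_sub]
        have h2 := LinearMap.congr_fun hs (p.mkQ x)
        rw [LinearMap.comp_apply, LinearMap.id_apply] at h2
        rw [h2, sub_self]
      rwa [Submodule.mkQ_apply, Submodule.Quotient.mk_eq_zero] at h1
    set f₀ : (Fin n → ℤ) →ₗ[ℤ] p := LinearMap.codRestrict p g hmem with hf₀
    have hproj : ∀ x : p, f₀ (x : Fin n → ℤ) = x := by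
      intro x
      apply Subtype.ext
      have h0 : p.mkQ (x : Fin n → ℤ) = 0 := by
        rw [Submodule.mkQ_apply, Submodule.Quotient.mk_eq_zero]
        exact x.2
      show g (x : Fin n → ℤ) = (x : Fin n → ℤ)
      rw [hgapp, h0, map_zero, sub_zero]
    have hcompl : IsCompl p (LinearMap.ker f₀) := LinearMap.isCompl_of_proj hproj
    exact ⟨(LinearMap.ker f₀).toAddSubgroup, AddSubgroup.toIntSubmodule.isCompl_iff.2 hcompl⟩
  · rintro ⟨N, hN⟩ a b ha hb hab
    obtain ⟨u, hu⟩ := exists_unit_shift M N hN a b ha hb hab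
    obtain ⟨v, hv⟩ := exists_unit_shift M N hN b a hb ha (by rwa [mul_comm])
    exact ⟨u, v, hu, hv⟩
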